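/- Let ϑ₁ be the random Fibonacci substitution a ↦ {ab, ba}, b ↦ {a}, and let f be the Fibonacci sequence with f_0 = f_1 = 1. For every p ≥ 1 and every natural number n whose Zeckendorf representation n = Σ_{i=1}^{p} ε_i f_i has leading digit ε_p = 1, and for every word u ∈ (ϑ₁ᵖ(b))^{ε_p}⋯(ϑ₁(b))^{ε_1}, either uab or uba appears as a prefix of some word in ϑ₁^{p+1}(a). -/
import Mathlib


/-- Two-letter alphabet. -/
inductive AB : Type
  | a : AB
  | b : AB
deriving DecidableEq

/-- Extension of a random substitution to words, by setwise concatenation. -/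
def substW (θ : AB → Set (List AB)) : List AB → Set (List AB)
  | [] => {[]}
  | x :: w => {u | ∃ v ∈ θ x, ∃ t ∈ substW θ w, u = v ++ t}

/-- Extension of a random substitution to sets of words. -/
def substS (θ : AB → Set (List AB)) (A : Set (List AB)) : Set (List AB) :=
  ⋃ w ∈ A, substW θ w

/-- Level-`n` inflation words of the letter `x`. -/
def substIter (θ : AB → Set (List AB)) (n : ℕ) (x : AB) : Set (List AB) :=
  (substS θ)^[n] {[x]}

/-- A word is legal if it is a subword of some level-`k` inflation word. -/
def legalW (θ : AB → Set (List AB)) (u : List AB) : Prop :=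
  ∃ (k : ℕ) (x : AB), ∃ w ∈ substIter θ k x, u <:+: w

/-- The random Fibonacci substitution a ↦ {ab, ba}, b ↦ {a}. -/
def randFib : AB → Set (List AB)
  | AB.a => {[AB.a, AB.b], [AB.b, AB.a]}
  | AB.b => {[AB.a]}

/-- `j`-fold setwise concatenation of a set of words with itself. -/
def setNPow (A : Set (List AB)) : ℕ → Set (List AB)
  | 0 => {[]}
  | j + 1 => {w | ∃ u ∈ setNPow A j, ∃ v ∈ A, w = u ++ v}

/-- The set `(ϑ₁ᵖ(b))^{ε_p} ⋯ (ϑ₁(b))^{ε_1}` of concatenations determined by a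
digit string `ε`. -/
def zeckChain (ε : ℕ → ℕ) : ℕ → Set (List AB)
  | 0 => {[]}
  | k + 1 => {w | ∃ u ∈ setNPow (substIter randFib (k + 1) AB.b) (ε (k + 1)),
      ∃ v ∈ zeckChain ε k, w = u ++ v}

-- aux
def cc (A B : Set (List AB)) : Set (List AB) := {w | ∃ u ∈ A, ∃ v ∈ B, w = u ++ v}

lemma mem_substS {θ : AB → Set (List AB)} {A : Set (List AB)} {x : List AB} :
    x ∈ substS θ A ↔ ∃ w ∈ A, x ∈ substW θ w := by
  simp [substS]

lemma substW_append (θ : AB → Set (List AB)) (w1 w2 : List AB) :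
    substW θ (w1 ++ w2) = cc (substW θ w1) (substW θ w2) := by
  induction w1 with
  | nil =>
    ext u
    constructor
    · intro h; exact ⟨[], rfl, u, h, rfl⟩
    · rintro ⟨u0, hu0, v, hv, rfl⟩
      simp only [substW, Set.mem_singleton_iff] at hu0
      subst hu0; simpa using hv
  | cons x w ih =>
    ext u
    constructor
    · rintro ⟨v, hv, t, ht, rfl⟩
      rw [List.append_eq, ih] at ht
      obtain ⟨t1, ht1, t2, ht2, rfl⟩ := ht
      exact ⟨v ++ t1, ⟨v, hv, t1, ht1, rfl⟩, t2, ht2, by simp [List.append_assoc]⟩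
    · rintro ⟨u0, ⟨v, hv, t1, ht1, rfl⟩, t2, ht2, rfl⟩
      exact ⟨v, hv, t1 ++ t2, by rw [List.append_eq, ih]; exact ⟨t1, ht1, t2, ht2, rfl⟩, by simp [List.append_assoc]⟩

lemma substS_cc (θ : AB → Set (List AB)) (A B : Set (List AB)) :
    substS θ (cc A B) = cc (substS θ A) (substS θ B) := by
  ext x
  rw [mem_substS]
  constructor
  · rintro ⟨w, ⟨u, hu, v, hv, rfl⟩, hx⟩
    rw [substW_append] at hx
    obtain ⟨s, hs, t, ht, rfl⟩ := hx
    exact ⟨s, mem_substS.2 ⟨u, hu, hs⟩, t, mem_substS.2 ⟨v, hv, ht⟩, rfl⟩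
  · rintro ⟨s, hs, t, ht, rfl⟩
    obtain ⟨u, hu, hs⟩ := mem_substS.1 hs
    obtain ⟨v, hv, ht⟩ := mem_substS.1 ht
    exact ⟨u ++ v, ⟨u, hu, v, hv, rfl⟩, by rw [substW_append]; exact ⟨s, hs, t, ht, rfl⟩⟩

lemma substS_union (θ : AB → Set (List AB)) (A B : Set (List AB)) :
    substS θ (A ∪ B) = substS θ A ∪ substS θ B := by
  unfold substS; exact Set.biUnion_union A B _

lemma iter_cc (θ : AB → Set (List AB)) (k : ℕ) (A B : Set (List AB)) :
    (substS θ)^[k] (cc A B) = cc ((substS θ)^[k] A) ((substS θ)^[k] B) := by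
  induction k generalizing A B with
  | zero => rfl
  | succ k ih =>
    rw [Function.iterate_succ_apply, substS_cc, ih, ← Function.iterate_succ_apply,
      ← Function.iterate_succ_apply]

lemma iter_union (θ : AB → Set (List AB)) (k : ℕ) (A B : Set (List AB)) :
    (substS θ)^[k] (A ∪ B) = (substS θ)^[k] A ∪ (substS θ)^[k] B := by
  induction k generalizing A B with
  | zero => rfl
  | succ k ih =>
    rw [Function.iterate_succ_apply, substS_union, ih, ← Function.iterate_succ_apply,
      ← Function.iterate_succ_apply]

lemma substS_single_b : substS randFib {[AB.b]} = {[AB.a]} := by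
  ext u
  rw [mem_substS]
  constructor
  · rintro ⟨w, hw, hu⟩
    simp only [Set.mem_singleton_iff] at hw; subst hw
    obtain ⟨v, hv, t, ht, rfl⟩ := hu
    simp only [randFib, Set.mem_singleton_iff] at hv
    simp only [substW, Set.mem_singleton_iff] at ht
    subst hv; subst ht; rfl
  · rintro rfl
    exact ⟨[AB.b], rfl, [AB.a], rfl, [], rfl, rfl⟩

lemma substS_single_a :
    substS randFib {[AB.a]} = cc {[AB.a]} {[AB.b]} ∪ cc {[AB.b]} {[AB.a]} := by
  ext u
  rw [mem_substS]
  constructor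
  · rintro ⟨w, hw, hu⟩
    simp only [Set.mem_singleton_iff] at hw; subst hw
    obtain ⟨v, hv, t, ht, rfl⟩ := hu
    simp only [substW, Set.mem_singleton_iff] at ht
    subst ht
    rcases hv with hv | hv <;> subst hv
    · exact Or.inl ⟨[AB.a], rfl, [AB.b], rfl, rfl⟩
    · exact Or.inr ⟨[AB.b], rfl, [AB.a], rfl, rfl⟩
  · rintro (⟨u0, hu0, v0, hv0, rfl⟩ | ⟨u0, hu0, v0, hv0, rfl⟩) <;>
      simp only [Set.mem_singleton_iff] at hu0 hv0 <;> subst hu0 <;> subst hv0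
    · exact ⟨[AB.a], rfl, [AB.a, AB.b], Or.inl rfl, [], rfl, rfl⟩
    · exact ⟨[AB.a], rfl, [AB.b, AB.a], Or.inr rfl, [], rfl, rfl⟩

lemma it_b_succ (k : ℕ) :
    substIter randFib (k + 1) AB.b = substIter randFib k AB.a := by
  unfold substIter
  rw [Function.iterate_succ_apply, substS_single_b]

lemma it_a_succ (k : ℕ) :
    substIter randFib (k + 1) AB.a =
      cc (substIter randFib k AB.a) (substIter randFib k AB.b) ∪
      cc (substIter randFib k AB.b) (substIter randFib k AB.a) := by
  unfold substIter
  rw [Function.iterate_succ_apply, substS_single_a, iter_union, iter_cc, iter_cc]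

lemma substW_nonempty (w : List AB) : (substW randFib w).Nonempty := by
  induction w with
  | nil => exact ⟨[], rfl⟩
  | cons x w ih =>
    obtain ⟨t, ht⟩ := ih
    cases x
    · exact ⟨[AB.a, AB.b] ++ t, ⟨[AB.a, AB.b], Or.inl rfl, t, ht, rfl⟩⟩
    · exact ⟨[AB.a] ++ t, ⟨[AB.a], rfl, t, ht, rfl⟩⟩

lemma it_nonempty (k : ℕ) (x : AB) : (substIter randFib k x).Nonempty := by
  induction k with
  | zero => exact ⟨[x], rfl⟩
  | succ k ih =>
    obtain ⟨w, hw⟩ := ih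
    obtain ⟨t, ht⟩ := substW_nonempty w
    exact ⟨t, by
      unfold substIter at hw ⊢
      rw [Function.iterate_succ_apply']
      exact mem_substS.2 ⟨w, hw, ht⟩⟩

-- main induction
lemma main_ind : ∀ (p : ℕ) (ε : ℕ → ℕ), (∀ i, ε i ≤ 1) →
    ∀ u ∈ zeckChain ε p, ∃ w ∈ substIter randFib (p + 1) AB.a,
      (u ++ [AB.a, AB.b]) <+: w ∨ (u ++ [AB.b, AB.a]) <+: w := by
  intro p
  induction p with
  | zero =>
    intro ε hε1 u hu
    simp only [zeckChain, Set.mem_singleton_iff] at hu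
    subst hu
    refine ⟨[AB.a, AB.b], ?_, Or.inl (by simp)⟩
    rw [it_a_succ]
    exact Or.inl ⟨[AB.a], rfl, [AB.b], rfl, rfl⟩
  | succ p ih =>
    intro ε hε1 u hu
    obtain ⟨v, hv, t, ht, rfl⟩ := hu
    obtain ⟨w', hw', hpre⟩ := ih ε hε1 t ht
    rcases Nat.le_one_iff_eq_zero_or_eq_one.mp (hε1 (p + 1)) with h | h
    · -- ε (p+1) = 0 : v = []
      rw [h] at hv
      simp only [setNPow, Set.mem_singleton_iff] at hv
      subst hv
      obtain ⟨s, hs⟩ := it_nonempty (p + 1) AB.b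
      refine ⟨w' ++ s, ?_, ?_⟩
      · rw [it_a_succ]
        exact Or.inl ⟨w', hw', s, hs, rfl⟩
      · rcases hpre with hpre | hpre
        · exact Or.inl (by simpa using hpre.trans (List.prefix_append w' s))
        · exact Or.inr (by simpa using hpre.trans (List.prefix_append w' s))
    · -- ε (p+1) = 1 : v ∈ It (p+1) b
      rw [h] at hv
      obtain ⟨u0, hu0, v0, hv0, rfl⟩ := hv
      simp only [setNPow, Set.mem_singleton_iff] at hu0
      subst hu0
      simp only [List.nil_append]
      refine ⟨v0 ++ w', ?_, ?_⟩
      · rw [it_a_succ]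
        exact Or.inr ⟨v0, hv0, w', hw', rfl⟩
      · rcases hpre with ⟨r, hr⟩ | ⟨r, hr⟩
        · exact Or.inl ⟨r, by rw [← hr]; simp [List.append_assoc]⟩
        · exact Or.inr ⟨r, by rw [← hr]; simp [List.append_assoc]⟩

/-- For `p ≥ 1` and a Zeckendorf digit string `ε_p ⋯ ε_1` with `ε_p = 1`, every
word `u ∈ (ϑ₁ᵖ(b))^{ε_p} ⋯ (ϑ₁(b))^{ε_1}` is such that `uab` or `uba` is a
prefix of some word in `ϑ₁^{p+1}(a)`. -/
theorem randFib_prefix (p : ℕ) (hp : 1 ≤ p) (ε : ℕ → ℕ)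
    (hε1 : ∀ i, ε i ≤ 1) (hεcons : ∀ i, ε i * ε (i + 1) = 0)
    (hεsupp : ∀ i, i ∉ Finset.Icc 1 p → ε i = 0) (hεtop : ε p = 1) :
    ∀ u ∈ zeckChain ε p, ∃ w ∈ substIter randFib (p + 1) AB.a,
      (u ++ [AB.a, AB.b]) <+: w ∨ (u ++ [AB.b, AB.a]) <+: w := by
  exact main_ind p ε hε1
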